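/- Let X be a compact Priestley space with partial order ≤, let i : X → X be an antitone map, and let + be a partial binary operation defined exactly on D₊ := {(x,y) ∈ X × X | y ≤ i(x)}, which is order-preserving in both coordinates (if (x,y) ∈ D₊, x' ≤ x and y' ≤ y then x' + y' ≤ x + y) and expanding (x ≤ x + y for all (x,y) ∈ D₊). Assume that for every x ∈ X the set {x + w | w ≤ i(x)} is totally ordered, and that for every z ≥ x there exists k ≤ i(x) such that for all w ≤ i(x): x + w ≤ z if and only if w ≤ k. Let ⋆ be a partial binary operation defined exactly on D⋆ := {(x,y) ∈ X × X | i(x) ≰ y}, and assume that for every (x,y) ∈ D⋆, x ⋆ y is the greatest lower bound in X of the set {x + w | w ≤ i(x) and w ≰ y}. Then for all clopen lower sets a, b ⊆ X with b nonempty: f₊(a, b) = f⋆(a, b). -/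

import Mathlib

def fplus {X : Type*} [Preorder X] (i : X → X) (p : X → X → X) (u v : Set X) : Set X :=
  {x | ∃ w, w ≤ i x ∧ w ∉ v ∧ p x w ∈ u}

def fstar {X : Type*} [Preorder X] (i : X → X) (s : X → X → X) (u v : Set X) : Set X :=
  {x | ∀ y ∈ v, ¬ i x ≤ y ∧ s x y ∈ u}

private lemma priestley_isClosed_Iic {X : Type*} [TopologicalSpace X] [Preorder X]
    [PriestleySpace X] (t : X) : IsClosed (Set.Iic t) := by
  rw [← isOpen_compl_iff]
  rw [isOpen_iff_forall_mem_open]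
  intro u hu
  obtain ⟨U, hUc, hUu, huU, htU⟩ := exists_isClopen_upper_of_not_le hu
  refine ⟨U, ?_, hUc.isOpen, huU⟩
  intro v hv hvt
  exact htU (hUu hvt hv)

private lemma chain_glb_mem {X : Type*} [TopologicalSpace X] [PartialOrder X] [PriestleySpace X]
    [CompactSpace X] {S : Set X} (hS : S.Nonempty) (hc : IsChain (· ≤ ·) S)
    {z : X} (hz : IsGLB S z) {a : Set X} (hac : IsClopen a) (hal : IsLowerSet a)
    (hza : z ∈ a) : ∃ t ∈ S, t ∈ a := by
  by_contra h
  push_neg at h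
  have hne : Nonempty S := hS.to_subtype
  have hinter : (⋂ t : S, Set.Iic (t : X) ∩ aᶜ).Nonempty := by
    apply IsCompact.nonempty_iInter_of_directed_nonempty_isCompact_isClosed
    · rintro ⟨t₁, ht₁⟩ ⟨t₂, ht₂⟩
      rcases eq_or_ne t₁ t₂ with rfl | hne'
      · exact ⟨⟨t₁, ht₁⟩, le_refl _, le_refl _⟩
      · rcases hc ht₁ ht₂ hne' with h12 | h21
        · exact ⟨⟨t₁, ht₁⟩, le_refl _,
            Set.inter_subset_inter_left _ (Set.Iic_subset_Iic.2 h12)⟩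
        · exact ⟨⟨t₂, ht₂⟩, Set.inter_subset_inter_left _ (Set.Iic_subset_Iic.2 h21),
            le_refl _⟩
    · rintro ⟨t, ht⟩
      exact ⟨t, Set.mem_Iic.2 le_rfl, h t ht⟩
    · intro t
      exact ((priestley_isClosed_Iic _).inter hac.compl.isClosed).isCompact
    · intro t
      exact (priestley_isClosed_Iic _).inter hac.compl.isClosed
  obtain ⟨l, hl⟩ := hinter
  have hlb : l ∈ lowerBounds S := by
    intro t ht
    exact (Set.mem_iInter.1 hl ⟨t, ht⟩).1
  have : l ≤ z := hz.2 hlb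
  exact (Set.mem_iInter.1 hl ⟨hS.choose, hS.choose_spec⟩).2 (hal this hza)

theorem stmt13 {X : Type*} [TopologicalSpace X] [PartialOrder X] [PriestleySpace X]
    [CompactSpace X]
    (i : X → X) (hi : Antitone i) (p : X → X → X)
    (hmono : ∀ x y x' y' : X, y ≤ i x → x' ≤ x → y' ≤ y → p x' y' ≤ p x y)
    (hexp : ∀ x y : X, y ≤ i x → x ≤ p x y)
    (hchain : ∀ x : X, IsChain (· ≤ ·) {z : X | ∃ w, w ≤ i x ∧ z = p x w})
    (hadj : ∀ x z : X, x ≤ z → ∃ k, k ≤ i x ∧ ∀ w, w ≤ i x → (p x w ≤ z ↔ w ≤ k))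
    (s : X → X → X)
    (hglb : ∀ x y : X, ¬ i x ≤ y →
      IsGLB {z : X | ∃ w, w ≤ i x ∧ ¬ w ≤ y ∧ z = p x w} (s x y))
    (a b : Set X) (hac : IsClopen a) (hal : IsLowerSet a)
    (hbc : IsClopen b) (hbl : IsLowerSet b) (hbne : b.Nonempty) :
    fplus i p a b = fstar i s a b := by
  ext x
  constructor
  · rintro ⟨w, hwi, hwb, hwa⟩ y hy
    have hniy : ¬ i x ≤ y := fun h => hwb (hbl (hwi.trans h) hy)
    have hnwy : ¬ w ≤ y := fun h => hwb (hbl h hy)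
    refine ⟨hniy, ?_⟩
    have hle : s x y ≤ p x w := (hglb x y hniy).1 ⟨w, hwi, hnwy, rfl⟩
    exact hal hle hwa
  · intro hx
    -- for each y in b, find w ≤ i x with p x w ∈ a, ¬ w ≤ y, plus a separating clopen upper set
    have key : ∀ y : b, ∃ w U, w ≤ i x ∧ p x w ∈ a ∧ IsClopen U ∧ IsUpperSet U ∧
        w ∈ U ∧ (y : X) ∉ U := by
      rintro ⟨y, hy⟩
      obtain ⟨hniy, hsa⟩ := hx y hy
      set S : Set X := {z : X | ∃ w, w ≤ i x ∧ ¬ w ≤ y ∧ z = p x w} with hS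
      have hSne : S.Nonempty := ⟨p x (i x), i x, le_rfl, hniy, rfl⟩
      have hSchain : IsChain (· ≤ ·) S := by
        refine IsChain.mono ?_ (hchain x)
        rintro z ⟨w, hw, _, rfl⟩
        exact ⟨w, hw, rfl⟩
      obtain ⟨t, ⟨w, hwi, hwy, rfl⟩, hta⟩ :=
        chain_glb_mem hSne hSchain (hglb x y hniy) hac hal hsa
      obtain ⟨U, hUc, hUu, hwU, hyU⟩ := exists_isClopen_upper_of_not_le hwy
      exact ⟨w, U, hwi, hta, hUc, hUu, hwU, hyU⟩
    choose w U hwi hpa hUc hUu hwU hyU using key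
    -- cover b by complements of the U's
    have hbcomp : IsCompact b := hbc.isClosed.isCompact
    have hcov : b ⊆ ⋃ y : b, (U y)ᶜ := by
      intro y hy
      exact Set.mem_iUnion.2 ⟨⟨y, hy⟩, hyU ⟨y, hy⟩⟩
    obtain ⟨t, ht⟩ := hbcomp.elim_finite_subcover (fun y : b => (U y)ᶜ)
      (fun y => (hUc y).compl.isOpen) hcov
    have htne : (t : Set b).Nonempty := by
      obtain ⟨y, hy⟩ := hbne
      obtain ⟨j, hj, _⟩ := Set.mem_iUnion₂.1 (ht hy)
      exact ⟨j, hj⟩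
    -- find the max of the finite chain p x (w j), j ∈ t
    obtain ⟨m, hmt, hmax⟩ := (t : Set b).toFinite.exists_maximalFor
      (fun j => p x (w j)) _ htne
    have hmaxle : ∀ j ∈ t, p x (w j) ≤ p x (w m) := by
      intro j hj
      rcases eq_or_ne (p x (w m)) (p x (w j)) with he | hne'
      · exact he.ge
      · rcases hchain x ⟨w m, hwi m, rfl⟩ ⟨w j, hwi j, rfl⟩ hne' with h1 | h2
        · exact hmax hj h1
        · exact h2
    set z := p x (w m) with hz
    have hxz : x ≤ z := hexp x (w m) (hwi m)
    obtain ⟨k, hki, hk⟩ := hadj x z hxz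
    refine ⟨k, hki, ?_, ?_⟩
    · intro hkb
      obtain ⟨j, hj, hkU⟩ := Set.mem_iUnion₂.1 (ht hkb)
      have : w j ≤ k := (hk (w j) (hwi j)).1 (hmaxle j hj)
      exact hkU (hUu j this (hwU j))
    · have : p x k ≤ z := (hk k hki).2 le_rfl
      exact hal this (hpa m)
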